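/- arXiv:2508.16840 — 8 statements merged into one kernel-verified Lean document; each statement's English description precedes it below -/
import Mathlib

section
/- Let f : ℕ → ℕ be non-decreasing and satisfy f(n) ≥ 1 for all n. Suppose there exists a constant C > 0 such that f(n) - f(n-1) ≤ C·f(n)/n for all n ≥ 1. Then for every K ≥ 1 there exists L > 0 such that f(K·n) ≤ L·f(n) for all n ≥ 1. -/
/-- If `f : ℕ → ℕ` is non-decreasing, everywhere positive, and its discrete
derivative satisfies `f(n) - f(n-1) ≤ C·f(n)/n` for all `n ≥ 1`, then for every `K ≥ 1`
there is `L > 0` with `f(K·n) ≤ L·f(n)` for all `n ≥ 1`. -/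
theorem stmt0 (f : ℕ → ℕ) (hmono : Monotone f) (hpos : ∀ n, 1 ≤ f n)
    (C : ℝ) (hC : 0 < C)
    (hder : ∀ n : ℕ, 1 ≤ n → (n : ℝ) * ((f n : ℝ) - (f (n - 1) : ℝ)) ≤ C * (f n : ℝ)) :
    ∀ K : ℕ, 1 ≤ K → ∃ L : ℝ, 0 < L ∧ ∀ n : ℕ, 1 ≤ n → (f (K * n) : ℝ) ≤ L * (f n : ℝ) := by
  intro K hK
  obtain ⟨M, hM1, hM2C⟩ : ∃ M : ℕ, 1 ≤ M ∧ 2 * C ≤ (M : ℝ) := by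
    refine ⟨max 1 ⌈2 * C⌉₊, le_max_left _ _, ?_⟩
    calc 2 * C ≤ (⌈2 * C⌉₊ : ℝ) := Nat.le_ceil _
      _ ≤ _ := by exact_mod_cast le_max_right 1 ⌈2 * C⌉₊
  set asc : ℕ → ℝ := fun m => ∏ i ∈ Finset.range M, ((m : ℝ) + i) with hasc
  have hascpos : ∀ m : ℕ, 1 ≤ m → 0 < asc m := by
    intro m hm
    apply Finset.prod_pos
    intro i _
    have h1 : (1 : ℝ) ≤ (m : ℝ) := by exact_mod_cast hm
    have h2 : (0 : ℝ) ≤ (i : ℝ) := Nat.cast_nonneg i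
    linarith
  have hascsucc : ∀ m : ℕ, (m : ℝ) * asc (m + 1) = asc m * ((m : ℝ) + M) := by
    intro m
    have h1 : (∏ i ∈ Finset.range (M + 1), ((m : ℝ) + i)) = asc m * ((m : ℝ) + M) := by
      rw [hasc]; exact Finset.prod_range_succ _ _
    have h2 : (∏ i ∈ Finset.range (M + 1), ((m : ℝ) + i))
        = (∏ i ∈ Finset.range M, ((m : ℝ) + ((i + 1 : ℕ) : ℝ))) * ((m : ℝ) + ((0 : ℕ) : ℝ)) :=
      Finset.prod_range_succ' _ _
    have h3 : asc (m + 1) = ∏ i ∈ Finset.range M, ((m : ℝ) + ((i + 1 : ℕ) : ℝ)) := by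
      rw [hasc]
      apply Finset.prod_congr rfl
      intro i _
      push_cast
      ring
    have h4 := h1.symm.trans h2
    rw [h3, h4]
    push_cast
    ring
  have step : ∀ m : ℕ, M ≤ m → (f (m + 1) : ℝ) * asc m ≤ (f m : ℝ) * asc (m + 1) := by
    intro m hm
    have hd := hder (m + 1) (by omega)
    rw [Nat.add_sub_cancel] at hd
    push_cast at hd
    have hmR : (M : ℝ) ≤ (m : ℝ) := by exact_mod_cast hm
    have hm1R : (1 : ℝ) ≤ (m : ℝ) := by
      have : (1 : ℝ) ≤ (M : ℝ) := by exact_mod_cast hM1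
      linarith
    have hb1 : (1 : ℝ) ≤ (f m : ℝ) := by exact_mod_cast hpos m
    have ha1 : (1 : ℝ) ≤ (f (m + 1) : ℝ) := by exact_mod_cast hpos (m + 1)
    have h1 : ((m : ℝ) + 1 - C) * (f (m + 1) : ℝ) ≤ ((m : ℝ) + 1) * (f m : ℝ) := by
      nlinarith [hd]
    have hMC : (0 : ℝ) < (m : ℝ) + 1 - C := by linarith
    have hdiff : (0 : ℝ) ≤ ((M : ℝ) - C) * (m : ℝ) + (M : ℝ) - C * M := by
      nlinarith [mul_le_mul_of_nonneg_left hmR (show (0 : ℝ) ≤ (M : ℝ) / 2 - C by linarith),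
        mul_le_mul_of_nonneg_left hmR (show (0 : ℝ) ≤ (M : ℝ) / 2 by linarith)]
    have h2 : (m : ℝ) * (f (m + 1) : ℝ) ≤ ((m : ℝ) + M) * (f m : ℝ) := by
      nlinarith [mul_le_mul_of_nonneg_left h1 (show (0 : ℝ) ≤ (m : ℝ) by linarith),
        mul_nonneg (show (0 : ℝ) ≤ (f m : ℝ) by linarith) hdiff, hMC]
    have hap : 0 < asc m := hascpos m (by omega)
    have hmpos : (0 : ℝ) < (m : ℝ) := by linarith
    rw [← mul_le_mul_iff_right₀ hmpos]
    calc (m : ℝ) * ((f (m + 1) : ℝ) * asc m)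
        = ((m : ℝ) * (f (m + 1) : ℝ)) * asc m := by ring
      _ ≤ (((m : ℝ) + M) * (f m : ℝ)) * asc m := by
          exact mul_le_mul_of_nonneg_right h2 (le_of_lt hap)
      _ = (f m : ℝ) * (asc m * ((m : ℝ) + M)) := by ring
      _ = (f m : ℝ) * ((m : ℝ) * asc (m + 1)) := by rw [hascsucc m]
      _ = (m : ℝ) * ((f m : ℝ) * asc (m + 1)) := by ring
  -- telescoping
  have mono : ∀ n : ℕ, M ≤ n → ∀ m : ℕ, n ≤ m → (f m : ℝ) * asc n ≤ (f n : ℝ) * asc m := by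
    intro n hn m hm
    induction m, hm using Nat.le_induction with
    | base => exact le_refl _
    | succ m hm ih =>
      have h1 := step m (le_trans hn hm)
      have hap : 0 < asc m := hascpos m (by omega)
      have hanp : 0 < asc n := hascpos n (by omega)
      have := mul_le_mul_of_nonneg_right h1 (le_of_lt hanp)
      have h2 := mul_le_mul_of_nonneg_right ih (le_of_lt hap)
      -- f(m+1) * asc n * asc m ≤ f m * asc(m+1) * asc n ≤ f n * asc m * asc(m+1)
      have h3 : (f (m + 1) : ℝ) * asc n * asc m ≤ (f n : ℝ) * asc (m + 1) * asc m := by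
        calc (f (m + 1) : ℝ) * asc n * asc m = (f (m + 1) : ℝ) * asc m * asc n := by ring
          _ ≤ (f m : ℝ) * asc (m + 1) * asc n := this
          _ = ((f m : ℝ) * asc n) * asc (m + 1) := by ring
          _ ≤ ((f n : ℝ) * asc m) * asc (m + 1) := by
              exact mul_le_mul_of_nonneg_right ih (by
                exact le_of_lt (hascpos (m + 1) (by omega)))
          _ = (f n : ℝ) * asc (m + 1) * asc m := by ring
      exact le_of_mul_le_mul_right h3 hap
  -- the main bound for n ≥ M
  have hL1 : (0 : ℝ) < ((K : ℝ) + M) ^ M := by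
    have : (0 : ℝ) < (K : ℝ) + M := by positivity
    positivity
  refine ⟨((K : ℝ) + M) ^ M + (f (K * M) : ℝ), by positivity, ?_⟩
  intro n hn
  by_cases hnM : M ≤ n
  · have h1 := mono n hnM (K * n) (Nat.le_mul_of_pos_left n (by omega))
    have hascbound : asc (K * n) ≤ ((K : ℝ) + M) ^ M * asc n := by
      have : ((K : ℝ) + M) ^ M * asc n = ∏ i ∈ Finset.range M, (((K : ℝ) + M) * ((n : ℝ) + i)) := by
        rw [hasc, Finset.prod_mul_distrib, Finset.prod_const, Finset.card_range]
      rw [this, hasc]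
      apply Finset.prod_le_prod
      · intro i _
        have h1 : (1 : ℝ) ≤ (n : ℝ) := by exact_mod_cast hn
        have h2 : (0 : ℝ) ≤ (i : ℝ) := Nat.cast_nonneg i
        have h3 : (1 : ℝ) ≤ (K : ℝ) := by exact_mod_cast hK
        positivity
      · intro i hi
        have h1 : (1 : ℝ) ≤ (n : ℝ) := by exact_mod_cast hn
        have h2 : (0 : ℝ) ≤ (i : ℝ) := Nat.cast_nonneg i
        have h3 : (1 : ℝ) ≤ (K : ℝ) := by exact_mod_cast hK
        have h4 : (i : ℝ) ≤ (M : ℝ) := by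
          have := Finset.mem_range.mp hi
          exact_mod_cast le_of_lt this
        have h5 : (1 : ℝ) ≤ (M : ℝ) := by exact_mod_cast hM1
        push_cast
        nlinarith
    have hanp : 0 < asc n := hascpos n (by omega)
    have h2 : (f (K * n) : ℝ) * asc n ≤ ((K : ℝ) + M) ^ M * (f n : ℝ) * asc n := by
      calc (f (K * n) : ℝ) * asc n ≤ (f n : ℝ) * asc (K * n) := h1
        _ ≤ (f n : ℝ) * (((K : ℝ) + M) ^ M * asc n) := by
            apply mul_le_mul_of_nonneg_left hascbound
            positivity
        _ = ((K : ℝ) + M) ^ M * (f n : ℝ) * asc n := by ring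
    have h3 := le_of_mul_le_mul_right h2 hanp
    have hfn1 : (1 : ℝ) ≤ (f n : ℝ) := by exact_mod_cast hpos n
    have hfKM : (0 : ℝ) ≤ (f (K * M) : ℝ) := by positivity
    nlinarith
  · push_neg at hnM
    have h1 : f (K * n) ≤ f (K * M) := hmono (Nat.mul_le_mul_left K (le_of_lt hnM))
    have h1R : (f (K * n) : ℝ) ≤ (f (K * M) : ℝ) := by exact_mod_cast h1
    have hfn1 : (1 : ℝ) ≤ (f n : ℝ) := by exact_mod_cast hpos n
    nlinarith [hL1]
end

section
/- Fix a sequence of positive integers 1 < d₂ < d₃ < ⋯ with d_{i+1} > 4·d_i for all i ≥ 2. Define f : ℕ → ℕ by f(1) = 2; for n ≥ 2 with n ∉ {2d₂, 2d₃, …}, f(n) = f(n-1) + 1; and f(2d_i) = i·f(d_i). Then f is strictly increasing: f(n) < f(n+1) for all n ≥ 1. -/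
/-- Given positive integers `1 < d₂ < d₃ < ⋯` with `d_{i+1} > 4 d_i`, the
function `f` with `f 1 = 2`, `f n = f (n-1) + 1` for `n ≥ 2` not of the form `2 d_i`,
and `f (2 d_i) = i · f (d_i)`, is strictly increasing. -/
theorem stmt2 (d : ℕ → ℕ) (hd2 : 1 < d 2) (hdgrow : ∀ i, 2 ≤ i → 4 * d i < d (i + 1))
    (f : ℕ → ℕ) (hf1 : f 1 = 2)
    (hfstep : ∀ n, 2 ≤ n → (¬ ∃ i, 2 ≤ i ∧ n = 2 * d i) → f n = f (n - 1) + 1)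
    (hfjump : ∀ i, 2 ≤ i → f (2 * d i) = i * f (d i)) :
    ∀ n, 1 ≤ n → f n < f (n + 1) := by
  have hdpos : ∀ i, 2 ≤ i → 2 ≤ d i := by
    intro i
    induction i with
    | zero => omega
    | succ j ih =>
      intro hi
      rcases Nat.lt_or_ge j 2 with h | h
      · have : j + 1 = 2 := by omega
        rw [this]; omega
      · have h1 := hdgrow j h
        have h2 := ih h
        omega
  have hmono : ∀ a, 2 ≤ a → ∀ b, a ≤ b → d a ≤ d b := by
    intro a ha b
    induction b with
    | zero => omega
    | succ j ih =>
      intro hab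
      rcases Nat.lt_or_ge j a with h | h
      · have : a = j + 1 := by omega
        rw [this]
      · have h1 := ih h
        have h2 := hdgrow j (by omega)
        have h3 := hdpos j (by omega)
        omega
  have hjump_sep : ∀ j i, 2 ≤ j → j < i → 2 * d j < d i := by
    intro j i hj hji
    have h1 := hdgrow j hj
    have h2 := hmono (j + 1) (by omega) i (by omega)
    have h3 := hdpos j hj
    omega
  have hA : ∀ n, 1 ≤ n → n + 1 ≤ f n := by
    intro n
    induction n using Nat.strong_induction_on with
    | _ n ih =>
      intro hn
      rcases Nat.lt_or_ge n 2 with h | h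
      · have : n = 1 := by omega
        subst this; omega
      · by_cases hj : ∃ i, 2 ≤ i ∧ n = 2 * d i
        · obtain ⟨i, hi, rfl⟩ := hj
          have hd := hdpos i hi
          have h1 := ih (d i) (by omega) (by omega)
          have h2 := hfjump i hi
          have h3 : 2 * f (d i) ≤ i * f (d i) := Nat.mul_le_mul_right _ hi
          omega
        · have h1 := hfstep n h hj
          have h2 := ih (n - 1) (by omega) (by omega)
          omega
  have hD : ∀ i, 2 ≤ i → ∀ k, k < d i → f (d i + k) = f (d i) + k := by
    intro i hi k
    induction k with
    | zero => simp
    | succ m ihm =>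
      intro hm
      have hdpi := hdpos i hi
      have hnojump : ¬ ∃ j, 2 ≤ j ∧ d i + (m + 1) = 2 * d j := by
        rintro ⟨j, hj, hje⟩
        rcases Nat.lt_or_ge j i with h | h
        · have := hjump_sep j i hj h; omega
        · have := hmono i hi j h; omega
      have hs := hfstep (d i + (m + 1)) (by omega) hnojump
      have h1 := ihm (by omega)
      have h2 : d i + (m + 1) - 1 = d i + m := by omega
      rw [h2] at hs
      omega
  intro n hn
  by_cases hj : ∃ i, 2 ≤ i ∧ n + 1 = 2 * d i
  · obtain ⟨i, hi, hie⟩ := hj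
    have hdpi := hdpos i hi
    have h1 := hD i hi (d i - 1) (by omega)
    have h2 := hfjump i hi
    have hA1 := hA (d i) (by omega)
    have hn' : n = d i + (d i - 1) := by omega
    have h4 : d i + (d i - 1) + 1 = 2 * d i := by omega
    rw [hn', h1, h4, h2]
    have h3 : 2 * f (d i) ≤ i * f (d i) := Nat.mul_le_mul_right _ hi
    omega
  · have hs := hfstep (n + 1) (by omega) hj
    simp at hs
    omega
end

section
/- Fix a sequence of positive integers 1 < d₂ < d₃ < ⋯ with d_{i+1} > 4·d_i for all i ≥ 2. Define f : ℕ → ℕ by f(1) = 2; for n ≥ 2 with n ∉ {2d₂, 2d₃, …}, f(n) = f(n-1) + 1; and f(2d_i) = i·f(d_i). Then f(2n) ≤ f(n)² for all n ≥ 1. -/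
/-- Given positive integers `1 < d₂ < d₃ < ⋯` with `d_{i+1} > 4 d_i`, the
function `f` with `f 1 = 2`, `f n = f (n-1) + 1` for `n ≥ 2` not of the form `2 d_i`,
and `f (2 d_i) = i · f (d_i)`, is strictly increasing. -/
theorem stmt3 (d : ℕ → ℕ) (hd2 : 1 < d 2) (hdgrow : ∀ i, 2 ≤ i → 4 * d i < d (i + 1))
    (f : ℕ → ℕ) (hf1 : f 1 = 2)
    (hfstep : ∀ n, 2 ≤ n → (¬ ∃ i, 2 ≤ i ∧ n = 2 * d i) → f n = f (n - 1) + 1)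
    (hfjump : ∀ i, 2 ≤ i → f (2 * d i) = i * f (d i)) :
    ∀ n, 1 ≤ n → f (2 * n) ≤ f n ^ 2 := by
  -- d i ≥ 2 for i ≥ 2
  have hdpos : ∀ i, 2 ≤ i → 2 ≤ d i := by
    intro i hi
    induction i with
    | zero => omega
    | succ k ih =>
      rcases Nat.lt_or_ge k 2 with h | h
      · have hk : k = 1 := by omega
        subst hk; exact hd2
      · have h1 := hdgrow k h
        have h2 := ih h
        omega
  -- d is monotone on [2, ∞)
  have hmono : ∀ i j, 2 ≤ i → i ≤ j → d i ≤ d j := by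
    intro i j hi hij
    induction j, hij using Nat.le_induction with
    | base => exact le_refl _
    | succ j hj ih =>
      have h1 := hdgrow j (by omega)
      have h2 := hdpos i hi
      omega
  -- i ≤ d i for i ≥ 2
  have hgei : ∀ i, 2 ≤ i → i ≤ d i := by
    intro i hi
    induction i with
    | zero => omega
    | succ k ih =>
      rcases Nat.lt_or_ge k 2 with h | h
      · have hk : k = 1 := by omega
        subst hk; exact hd2
      · have h1 := hdgrow k h
        have h2 := ih h
        omega
  -- big gaps
  have hgap : ∀ j i, 2 ≤ j → j < i → 4 * d j < d i := by
    intro j i hj hji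
    have h1 := hdgrow j hj
    have h2 := hmono (j+1) i (by omega) (by omega)
    omega
  -- run lemma
  have hrun : ∀ a, 1 ≤ a → ∀ b, a ≤ b →
      (∀ j, 2 ≤ j → ¬(a < 2 * d j ∧ 2 * d j ≤ b)) → f b = f a + (b - a) := by
    intro a ha b hb
    induction b, hb using Nat.le_induction with
    | base => intro _; simp
    | succ b hb ih =>
      intro hnoj
      have hstep := hfstep (b+1) (by omega) ?noex
      case noex =>
        rintro ⟨j, hj, he⟩
        exact hnoj j hj ⟨by omega, by omega⟩
      have hih := ih (fun j hj hc => hnoj j hj ⟨hc.1, by omega⟩)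
      simp only [Nat.add_sub_cancel] at hstep
      omega
  -- f n ≥ n + 1
  have flower : ∀ n, 1 ≤ n → n + 1 ≤ f n := by
    intro n
    induction n using Nat.strong_induction_on with
    | _ n ih =>
      intro hn
      rcases Nat.lt_or_ge n 2 with h | h
      · have : n = 1 := by omega
        subst this; omega
      · by_cases hex : ∃ i, 2 ≤ i ∧ n = 2 * d i
        · obtain ⟨i, hi, he⟩ := hex
          have hdi := hdpos i hi
          have h1 : d i + 1 ≤ f (d i) := ih (d i) (by omega) (by omega)
          rw [he, hfjump i hi]
          calc 2 * d i + 1 ≤ 2 * (d i + 1) := by omega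
            _ ≤ 2 * f (d i) := by omega
            _ ≤ i * f (d i) := Nat.mul_le_mul_right _ hi
        · have h1 := hfstep n h hex
          have h2 := ih (n-1) (by omega) (by omega)
          omega
  -- main proof
  intro n hn
  rcases Nat.lt_or_ge n (d 2) with hbase | hmain
  · -- base case: n < d 2
    have hnoj : ∀ b, b ≤ 2 * n → ∀ j, 2 ≤ j → ¬(1 < 2 * d j ∧ 2 * d j ≤ b) := by
      intro b hble j hj hc
      have := hmono 2 j (le_refl _) hj
      omega
    have h1 : f n = f 1 + (n - 1) := hrun 1 (by omega) n hn (fun j hj => hnoj n (by omega) j hj)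
    have h2 : f (2*n) = f 1 + (2*n - 1) := hrun 1 (by omega) (2*n) (by omega) (hnoj (2*n) (le_refl _))
    have hfn : f n = n + 1 := by omega
    have hf2n : f (2*n) = 2*n + 1 := by omega
    rw [hfn, hf2n]
    nlinarith
  · -- n ≥ d 2: find greatest i with 2 ≤ i ∧ d i ≤ n
    set P : ℕ → Prop := fun j => 2 ≤ j ∧ d j ≤ n with hP
    have hPdec : DecidablePred P := fun j => instDecidableAnd
    set i := Nat.findGreatest P n with hi_def
    have hP2 : P 2 := ⟨le_refl _, hmain⟩
    have hspec : P i := Nat.findGreatest_spec (m := 2) (by omega) hP2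
    obtain ⟨hi2, hdin⟩ := hspec
    have hmax : ∀ j, 2 ≤ j → d j ≤ n → j ≤ i := by
      intro j hj hdj
      by_contra hc
      push_neg at hc
      rcases Nat.lt_or_ge n j with h | h
      · have := hgei j hj; omega
      · exact Nat.findGreatest_is_greatest hc h ⟨hj, hdj⟩
    have hnext : n < d (i+1) := by
      by_contra hc
      push_neg at hc
      have := hmax (i+1) (by omega) hc
      omega
    have hgrow_i := hdgrow i hi2
    have hdi2 := hdpos i hi2
    have hF : d i + 1 ≤ f (d i) := flower (d i) (by omega)
    have hiF : i ≤ f (d i) := le_trans (hgei i hi2) (by omega)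
    -- no jump 2*d j strictly between given bounds: helper
    rcases Nat.lt_or_ge n (2 * d i) with hA | hB
    · -- Case A: d i ≤ n < 2 d i
      have hfn : f n = f (d i) + (n - d i) := by
        apply hrun (d i) (by omega) n hdin
        intro j hj ⟨hc1, hc2⟩
        rcases lt_trichotomy j i with h | h | h
        · have := hgap j i hj h; omega
        · subst h; omega
        · have h1 := hmono (i+1) j (by omega) h; omega
      have hf2di := hfjump i hi2
      have hf2n : f (2*n) = i * f (d i) + (2*n - 2*d i) := by
        rw [← hf2di]
        apply hrun (2 * d i) (by omega) (2*n) (by omega)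
        intro j hj ⟨hc1, hc2⟩
        rcases lt_trichotomy j i with h | h | h
        · have := hgap j i hj h; omega
        · subst h; omega
        · have h1 := hmono (i+1) j (by omega) h; omega
      obtain ⟨t, ht⟩ : ∃ t, n = d i + t := ⟨n - d i, by omega⟩
      rw [hfn, hf2n]
      have h1 : n - d i = t := by omega
      have h2 : 2*n - 2*d i = 2*t := by omega
      rw [h1, h2]
      have e : (f (d i) + t)^2 = f (d i) * f (d i) + 2 * (f (d i) * t) + t * t := by ring
      have h3 : i * f (d i) ≤ f (d i) * f (d i) := Nat.mul_le_mul_right _ hiF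
      have h4 : t ≤ f (d i) * t := Nat.le_mul_of_pos_left t (by omega)
      omega
    · -- Case B: 2 d i ≤ n < d (i+1)
      have hf2di := hfjump i hi2
      have hfn : f n = i * f (d i) + (n - 2*d i) := by
        rw [← hf2di]
        apply hrun (2 * d i) (by omega) n hB
        intro j hj ⟨hc1, hc2⟩
        rcases lt_trichotomy j i with h | h | h
        · have := hgap j i hj h; omega
        · subst h; omega
        · have h1 := hmono (i+1) j (by omega) h; omega
      have hf2n : f (2*n) = i * f (d i) + (2*n - 2*d i) := by
        rw [← hf2di]
        apply hrun (2 * d i) (by omega) (2*n) (by omega)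
        intro j hj ⟨hc1, hc2⟩
        rcases lt_trichotomy j i with h | h | h
        · have := hgap j i hj h; omega
        · subst h; omega
        · have h1 := hmono (i+1) j (by omega) h; omega
      obtain ⟨s, hs⟩ : ∃ s, n = 2 * d i + s := ⟨n - 2*d i, by omega⟩
      rw [hfn, hf2n]
      have h1 : n - 2*d i = s := by omega
      have h2 : 2*n - 2*d i = 2*s + 2*d i := by omega
      rw [h1, h2]
      have hX : 2 * (d i + 1) ≤ i * f (d i) := Nat.mul_le_mul hi2 hF
      have hXpos : 0 < i * f (d i) := by omega
      have e : (i * f (d i) + s)^2 =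
          i * f (d i) * (i * f (d i)) + 2 * (i * f (d i) * s) + s * s := by ring
      have h3 : i * f (d i) * (2 * (d i + 1)) ≤ i * f (d i) * (i * f (d i)) :=
        Nat.mul_le_mul_left _ hX
      have e2 : i * f (d i) * (2 * (d i + 1)) =
          2 * (i * f (d i) * d i) + 2 * (i * f (d i)) := by ring
      have h4 : d i ≤ i * f (d i) * d i := Nat.le_mul_of_pos_left (d i) hXpos
      have h5 : s ≤ i * f (d i) * s := Nat.le_mul_of_pos_left s hXpos
      omega
end

section
/- Let v be a nonempty word that belongs to sets constructed as follows: W(0) = Σ for a finite alphabet Σ, and W(k+1) = W(k)·C(k) where C(k) ⊆ W(k) and every word in W(k) has length 2^k. If v is a prefix of some word in W(t), then v can be written as a concatenation v = v₁v₂⋯v_s with v_i ∈ W(m_i) for some strictly decreasing sequence m₁ > m₂ > ⋯ > m_s ≥ 0. -/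
theorem stmt9_aux {A : Type*} (W C : ℕ → Set (List A))
    (hW0 : W 0 = {l : List A | ∃ c : A, l = [c]})
    (hC : ∀ k, C k ⊆ W k)
    (hWsucc : ∀ k, W (k + 1) = {v : List A | ∃ x ∈ W k, ∃ y ∈ C k, v = x ++ y})
    (hlen : ∀ k, ∀ u ∈ W k, u.length = 2 ^ k) :
    ∀ t (v x : List A), v ≠ [] → x ∈ W t → v <+: x →
    ∃ (ms : List ℕ) (parts : List (List A)),
      List.Chain' (· > ·) ms ∧
      List.Forall₂ (fun (m : ℕ) (p : List A) => p ∈ W m) ms parts ∧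
      parts.flatten = v := by
  intro t
  induction t with
  | zero =>
    intro v x hv hx hpre
    rw [hW0] at hx
    obtain ⟨c, rfl⟩ := hx
    have hl1 : v.length = 1 := by
      have h1 := hpre.length_le
      simp at h1
      have h2 : 0 < v.length := List.length_pos_iff.mpr hv
      omega
    have : v = [c] := by
      have := List.prefix_iff_eq_take.mp hpre
      rw [hl1] at this
      simpa using this
    subst this
    exact ⟨[0], [[c]], List.isChain_singleton _, by simp [hW0], by simp⟩
  | succ k ih =>
    intro v x hv hx hpre
    rw [hWsucc] at hx
    obtain ⟨a, ha, b, hb, rfl⟩ := hx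
    have hbW : b ∈ W k := hC k hb
    have hal : a.length = 2 ^ k := hlen k a ha
    have hbl : b.length = 2 ^ k := hlen k b hbW
    rcases le_or_gt v.length (2 ^ k) with hle | hgt
    · -- v is a prefix of a
      have hva : v <+: a := by
        have := List.prefix_iff_eq_take.mp hpre
        rw [List.take_append] at this
        have h0 : v.length - a.length = 0 := by omega
        rw [h0] at this
        simp at this
        rw [this]
        exact List.take_prefix _ _
      exact ih v a hv ha hva
    · -- a is a proper-ish prefix of v
      have hvlen : v.length ≤ 2 ^ k + 2 ^ k := by
        have := hpre.length_le
        simp [hal, hbl] at this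
        omega
      have hve : v = a ++ b.take (v.length - a.length) := by
        conv_lhs => rw [List.prefix_iff_eq_take.mp hpre]
        rw [List.take_append, List.take_of_length_le (by omega)]
      set v' := b.take (v.length - a.length) with hv'def
      have hv'len : v'.length = v.length - 2 ^ k := by
        simp [hv'def, hbl, hal]
        omega
      rcases eq_or_lt_of_le hvlen with heq | hlt
      · -- v = a ++ b whole
        have hv'b : v' = b := by
          apply List.take_of_length_le
          omega
        refine ⟨[k + 1], [v], List.isChain_singleton _, ?_, by simp⟩
        refine List.Forall₂.cons ?_ List.Forall₂.nil
        rw [hWsucc]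
        exact ⟨a, ha, b, hb, by rw [hve, hv'b]⟩
      · -- v' is a proper nonempty prefix of b
        have hv'ne : v' ≠ [] := by
          intro h
          have := congrArg List.length h
          simp [hv'len] at this
          omega
        obtain ⟨ms, parts, hchain, hforall, hflat⟩ :=
          ih v' b hv'ne hbW (List.take_prefix _ _)
        refine ⟨k :: ms, a :: parts, ?_, List.Forall₂.cons ha hforall, by simp [hflat, hve]⟩
        apply List.isChain_cons.mpr
        refine ⟨?_, hchain⟩
        intro m hm
        -- m is head of ms; first part has length 2^m ≤ v'.length < 2^k
        cases ms with
        | nil => simp at hm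
        | cons m0 rest =>
          simp at hm
          subst hm
          cases hforall with
          | cons hp hrest =>
            rename_i p prest
            have hplen : p.length = 2 ^ m0 := hlen m0 p hp
            have : p.length ≤ v'.length := by
              rw [← hflat]; simp
            rw [hplen, hv'len] at this
            have h2 : 2 ^ m0 < 2 ^ k := by omega
            exact (Nat.pow_lt_pow_iff_right one_lt_two).mp h2

/-- Let `W 0 = Σ` (all one-letter words) and `W (k+1) = W k · C k` with
`C k ⊆ W k` (so every word in `W k` has length `2^k`). Every nonempty prefix `v` of a
word in some `W t` decomposes as `v = v₁⋯v_s` with `v_i ∈ W (m_i)` for a strictly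
decreasing sequence `m₁ > ⋯ > m_s ≥ 0`. -/
theorem stmt9 {A : Type*} [Fintype A] (W C : ℕ → Set (List A))
    (hW0 : W 0 = {l : List A | ∃ c : A, l = [c]})
    (hC : ∀ k, C k ⊆ W k)
    (hWsucc : ∀ k, W (k + 1) = {v : List A | ∃ x ∈ W k, ∃ y ∈ C k, v = x ++ y})
    (hlen : ∀ k, ∀ u ∈ W k, u.length = 2 ^ k)
    (v : List A) (hv : v ≠ []) (t : ℕ) (x : List A) (hx : x ∈ W t) (hpre : v <+: x) :
    ∃ (ms : List ℕ) (parts : List (List A)),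
      List.Chain' (· > ·) ms ∧
      List.Forall₂ (fun (m : ℕ) (p : List A) => p ∈ W m) ms parts ∧
      parts.flatten = v := by
  exact stmt9_aux W C hW0 hC hWsucc hlen t v x hv hx hpre
end

section
/- Let Σ be a finite alphabet and let sets W(k) ⊆ Σ^{2^k} satisfy W(0) = Σ and W(k+1) = W(k)·C(k) with C(k) ⊆ W(k). If v is a nonempty suffix of some word in W(t), then v = v₁v₂⋯v_r with v_i ∈ W(n_i) for some strictly increasing sequence 0 ≤ n₁ < n₂ < ⋯ < n_r. -/
lemma stmt10_aux {A : Type*} (W C : ℕ → Set (List A))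
    (hC : ∀ k, C k ⊆ W k)
    (hWsucc : ∀ k, W (k + 1) = {v : List A | ∃ x ∈ W k, ∃ y ∈ C k, v = x ++ y})
    (hlen : ∀ k, ∀ u ∈ W k, u.length = 2 ^ k) :
    ∀ t (x : List A), x ∈ W t → ∀ v, v ≠ [] → v <:+ x → v.length < 2 ^ t →
    ∃ (ms : List ℕ) (parts : List (List A)),
      List.Chain' (· < ·) ms ∧
      List.Forall₂ (fun (m : ℕ) (p : List A) => p ∈ W m) ms parts ∧
      parts.flatten = v ∧ ∀ m ∈ ms, m < t := by
  intro t
  induction t with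
  | zero =>
      intro x hx v hv hsuf hlt
      have := List.length_pos_iff.mpr hv
      simp only [pow_zero, Nat.lt_one_iff] at hlt
      omega
  | succ t ih =>
      intro x hx v hv hsuf hlt
      rw [hWsucc] at hx
      obtain ⟨a, ha, b, hbC, rfl⟩ := hx
      have hb : b ∈ W t := hC t hbC
      have la : a.length = 2 ^ t := hlen t a ha
      have lb : b.length = 2 ^ t := hlen t b hb
      obtain ⟨u, hu⟩ := hsuf
      by_cases hle : v.length ≤ 2 ^ t
      · -- v is a suffix of b
        have hulen : a.length ≤ u.length := by
          have := congrArg List.length hu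
          simp at this; omega
        have hvb : v <:+ b := by
          refine ⟨u.drop a.length, ?_⟩
          have h2 : (u.drop a.length) ++ v = (u ++ v).drop a.length := by
            rw [List.drop_append_of_le_length (by omega)]
          rw [h2, hu, List.drop_append_of_le_length (le_refl _), List.drop_length,
            List.nil_append]
        rcases eq_or_lt_of_le hle with heq | hlt'
        · have : v = b := hvb.eq_of_length (by omega)
          subst this
          exact ⟨[t], [v], List.isChain_singleton _, List.forall₂_cons.mpr ⟨hb, List.Forall₂.nil⟩,
            by simp, by simp⟩
        · obtain ⟨ms, parts, h1, h2, h3, h4⟩ := ih b hb v hv hvb hlt'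
          exact ⟨ms, parts, h1, h2, h3, fun m hm => Nat.lt_succ_of_lt (h4 m hm)⟩
      · -- v = v' ++ b with v' a proper suffix of a
        push_neg at hle
        set v' := v.take (v.length - 2 ^ t) with hv'
        set v₂ := v.drop (v.length - 2 ^ t) with hv₂
        have hsplit : v' ++ v₂ = v := List.take_append_drop _ _
        have lv₂ : v₂.length = 2 ^ t := by rw [hv₂, List.length_drop]; omega
        have lv' : v'.length = v.length - 2 ^ t := by rw [hv', List.length_take]; omega
        have key : (u ++ v') ++ v₂ = a ++ b := by rw [List.append_assoc, hsplit, hu]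
        have hinj := List.append_inj' key (by omega)
        have hv'a : v' <:+ a := ⟨u, hinj.1⟩
        have hv'ne : v' ≠ [] := by
          intro h; rw [h] at lv'; simp at lv'
          have hp : 0 < 2 ^ t := pow_pos (by norm_num) t
          have := List.length_pos_iff.mpr hv
          omega
        have hv'lt : v'.length < 2 ^ t := by
          have hp2 : (2:ℕ) ^ (t+1) = 2 ^ t * 2 := pow_succ 2 t
          rw [lv']; omega
        obtain ⟨ms, parts, h1, h2, h3, h4⟩ := ih a ha v' hv'ne hv'a hv'lt
        refine ⟨ms ++ [t], parts ++ [b], ?_, ?_, ?_, ?_⟩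
        · show List.IsChain _ _; rw [List.isChain_append]
          refine ⟨h1, List.isChain_singleton _, fun m hm y hy => ?_⟩
          simp at hy; subst hy
          exact h4 m (List.mem_of_mem_getLast? hm)
        · exact List.rel_append h2 (List.forall₂_cons.mpr ⟨hb, List.Forall₂.nil⟩)
        · rw [List.flatten_append, h3]; simpa [hinj.2] using hsplit
        · intro m hm
          rcases List.mem_append.mp hm with h | h
          · exact Nat.lt_succ_of_lt (h4 m h)
          · simp at h; omega

/-- Let `W 0 = Σ` (all one-letter words) and `W (k+1) = W k · C k` with
`C k ⊆ W k` (so every word in `W k` has length `2^k`). Every nonempty suffix `v` of a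
word in some `W t` decomposes as `v = v₁⋯v_s` with `v_i ∈ W (m_i)` for a strictly
increasing sequence `0 ≤ n₁ < ⋯ < n_r`. -/
theorem stmt10 {A : Type*} [Fintype A] (W C : ℕ → Set (List A))
    (hW0 : W 0 = {l : List A | ∃ c : A, l = [c]})
    (hC : ∀ k, C k ⊆ W k)
    (hWsucc : ∀ k, W (k + 1) = {v : List A | ∃ x ∈ W k, ∃ y ∈ C k, v = x ++ y})
    (hlen : ∀ k, ∀ u ∈ W k, u.length = 2 ^ k)
    (v : List A) (hv : v ≠ []) (t : ℕ) (x : List A) (hx : x ∈ W t) (hpre : v <:+ x) :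
    ∃ (ms : List ℕ) (parts : List (List A)),
      List.Chain' (· < ·) ms ∧
      List.Forall₂ (fun (m : ℕ) (p : List A) => p ∈ W m) ms parts ∧
      parts.flatten = v := by
  have lx := hlen t x hx
  rcases lt_or_eq_of_le (hpre.length_le.trans_eq lx) with hlt | heq
  · obtain ⟨ms, parts, h1, h2, h3, _⟩ :=
      stmt10_aux W C hC hWsucc hlen t x hx v hv hpre hlt
    exact ⟨ms, parts, h1, h2, h3⟩
  · have : v = x := hpre.eq_of_length (by omega)
    subst this
    exact ⟨[t], [v], List.isChain_singleton _,
      List.forall₂_cons.mpr ⟨hx, List.Forall₂.nil⟩, by simp⟩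
end

section
/- Let f : ℕ → ℕ be non-decreasing, submultiplicative (f(m+n) ≤ f(m)·f(n)), and subexponential (f(n)^{1/n} → 1). Set b = f(1). Then there exists a sequence of positive integers (c_k)_{k≥0} with c₀ = 1, c_{k+1} ≤ N_k for all k (where N_k = b·c₀·c₁⋯c_k), such that f(2^k) ≤ N_k ≤ 2·f(2^{k+1}) for all k ≥ 0, and c_k = 1 for infinitely many k. -/
open Filter

section Stmt11Aux
open Finset

namespace Stmt11Aux

/-- State machine: `st f k = (c_k, N_k, flag_k)` for the construction. -/
def st (f : ℕ → ℕ) : ℕ → ℕ × ℕ × Bool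
  | 0 => (1, f 1, false)
  | k+1 =>
    if (st f k).2.2 then (1, (st f k).2.1, false)
    else if (st f k).2.1 ^ 2 ≤ 2 * f (2^(k+2)) then ((st f k).2.1, (st f k).2.1 ^ 2, false)
    else (2 * f (2^(k+2)) / (st f k).2.1,
          (st f k).2.1 * (2 * f (2^(k+2)) / (st f k).2.1), true)

variable {f : ℕ → ℕ}

lemma N_succ (f : ℕ → ℕ) (k : ℕ) :
    (st f (k+1)).2.1 = (st f k).2.1 * (st f (k+1)).1 := by
  rw [st]
  split_ifs <;> simp [sq]

lemma N_eq_prod (f : ℕ → ℕ) : ∀ k, (st f k).2.1 = f 1 * ∏ j ∈ range (k+1), (st f j).1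
  | 0 => by simp [st]
  | k+1 => by
    rw [prod_range_succ, ← mul_assoc, ← N_eq_prod f k, N_succ]

lemma flag_c (k : ℕ) (h : (st f k).2.2 = true) : (st f (k+1)).1 = 1 := by
  rw [st]; simp [h]

lemma case2_flag (k : ℕ) (h1 : (st f k).2.2 = false)
    (h2 : ¬ (st f k).2.1 ^ 2 ≤ 2 * f (2^(k+2))) : (st f (k+1)).2.2 = true := by
  rw [st]; simp [h1, h2]

lemma case1_N (k : ℕ) (h1 : (st f k).2.2 = false)
    (h2 : (st f k).2.1 ^ 2 ≤ 2 * f (2^(k+2))) :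
    (st f (k+1)).2.1 = (st f k).2.1 ^ 2 ∧ (st f (k+1)).1 = (st f k).2.1 := by
  rw [st]; simp [h1, h2]

lemma inv (hmono : Monotone f) (hpos : ∀ n, 1 ≤ f n)
    (hsub : ∀ m n : ℕ, 1 ≤ m → 1 ≤ n → f (m + n) ≤ f m * f n) :
    ∀ k, (f (2^k) ≤ (st f k).2.1 ∧ (st f k).2.1 ≤ 2 * f (2^(k+1))) ∧
      ((st f k).2.2 = true → f (2^(k+1)) ≤ (st f k).2.1)
  | 0 => by
    refine ⟨⟨by simp [st], ?_⟩, by simp [st]⟩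
    have h := hmono (show (1:ℕ) ≤ 2^(0+1) by norm_num)
    simp only [st]
    omega
  | k+1 => by
    obtain ⟨⟨hlo, hhi⟩, hflag⟩ := inv hmono hpos hsub k
    have hN1 : 1 ≤ (st f k).2.1 := le_trans (hpos _) hlo
    have hsq : f (2^(k+1)) ≤ (st f k).2.1 ^ 2 := by
      have h2 : 2^(k+1) = 2^k + 2^k := by ring
      calc f (2^(k+1)) = f (2^k + 2^k) := by rw [h2]
        _ ≤ f (2^k) * f (2^k) := hsub _ _ Nat.one_le_two_pow Nat.one_le_two_pow
        _ ≤ (st f k).2.1 * (st f k).2.1 := Nat.mul_le_mul hlo hlo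
        _ = (st f k).2.1 ^ 2 := (sq _).symm
    rw [st]
    split_ifs with h1 h2
    · refine ⟨⟨hflag h1, ?_⟩, by simp⟩
      exact le_trans hhi (Nat.mul_le_mul_left 2 (hmono (Nat.pow_le_pow_right (by norm_num) (by omega))))
    · refine ⟨⟨hsq, h2⟩, by simp⟩
    · set N := (st f k).2.1
      set F := 2 * f (2^(k+2)) with hF
      have hNF : N ≤ F := le_trans hhi
        (Nat.mul_le_mul_left 2 (hmono (Nat.pow_le_pow_right (by norm_num) (by omega))))
      have hq1 : 1 ≤ F / N := (Nat.one_le_div_iff hN1).2 hNF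
      have hub : N * (F / N) ≤ F := by
        calc N * (F / N) = F / N * N := mul_comm _ _
          _ ≤ F := Nat.div_mul_le_self _ _
      have hlb : f (2^(k+2)) < N * (F / N) := by
        have h3 : F < F / N * N + N := Nat.lt_div_mul_add hN1
        have h4 : N ≤ F / N * N := le_trans (by omega) (Nat.mul_le_mul_right N hq1)
        have h5 : F / N * N = N * (F / N) := mul_comm _ _
        omega
      constructor
      · constructor
        · exact le_trans (hmono (Nat.pow_le_pow_right (by norm_num) (by omega))) hlb.le
        · exact hub
      · intro _
        exact hlb.le

lemma Npos (hmono : Monotone f) (hpos : ∀ n, 1 ≤ f n)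
    (hsub : ∀ m n : ℕ, 1 ≤ m → 1 ≤ n → f (m + n) ≤ f m * f n) (k : ℕ) :
    1 ≤ (st f k).2.1 :=
  le_trans (hpos _) ((inv hmono hpos hsub k).1.1)

lemma cpos (hmono : Monotone f) (hpos : ∀ n, 1 ≤ f n)
    (hsub : ∀ m n : ℕ, 1 ≤ m → 1 ≤ n → f (m + n) ≤ f m * f n) :
    ∀ k, 1 ≤ (st f k).1
  | 0 => le_refl _
  | k+1 => by
    have hN1 := Npos hmono hpos hsub k
    have hub := (inv hmono hpos hsub k).1.2
    rw [st]
    split_ifs with h1 h2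
    · exact le_refl _
    · exact hN1
    · refine (Nat.one_le_div_iff hN1).2 ?_
      exact le_trans hub (Nat.mul_le_mul_left 2 (hmono (Nat.pow_le_pow_right (by norm_num) (by omega))))

lemma cle (hmono : Monotone f) (hpos : ∀ n, 1 ≤ f n)
    (hsub : ∀ m n : ℕ, 1 ≤ m → 1 ≤ n → f (m + n) ≤ f m * f n) (k : ℕ) :
    (st f (k+1)).1 ≤ (st f k).2.1 := by
  have hN1 := Npos hmono hpos hsub k
  rw [st]
  split_ifs with h1 h2
  · exact hN1
  · exact le_refl _
  · have : 2 * f (2^(k+2)) < (st f k).2.1 * (st f k).2.1 := by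
      rw [← sq]; omega
    exact le_of_lt ((Nat.div_lt_iff_lt_mul hN1).2 this)

lemma infinite_one (hmono : Monotone f) (hpos : ∀ n, 1 ≤ f n)
    (hsub : ∀ m n : ℕ, 1 ≤ m → 1 ≤ n → f (m + n) ≤ f m * f n)
    (hsubexp : Tendsto (fun n : ℕ => (f n : ℝ) ^ ((1 : ℝ) / (n : ℝ))) atTop (nhds 1)) :
    {k : ℕ | (st f k).1 = 1}.Infinite := by
  by_contra hfin
  rw [Set.not_infinite] at hfin
  obtain ⟨K₀, hK₀⟩ := hfin.bddAbove
  set K : ℕ := K₀ + 1 with hK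
  have hc2 : ∀ k, K ≤ k → 2 ≤ (st f k).1 := by
    intro k hk
    have h1 := cpos hmono hpos hsub k
    have : (st f k).1 ≠ 1 := by
      intro h
      exact absurd (hK₀ h) (by omega)
    omega
  have hflagfalse : ∀ k, K ≤ k → (st f k).2.2 = false := by
    intro k hk
    by_contra h
    rw [Bool.not_eq_false] at h
    have := flag_c k h
    have := hc2 (k+1) (by omega)
    omega
  have hcase1 : ∀ k, K ≤ k →
      (st f (k+1)).2.1 = (st f k).2.1 ^ 2 ∧ (st f (k+1)).1 = (st f k).2.1 := by
    intro k hk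
    refine case1_N k (hflagfalse k hk) ?_
    by_contra h
    have := case2_flag k (hflagfalse k hk) h
    have h2 := hflagfalse (k+1) (by omega)
    rw [this] at h2
    exact absurd h2 (by simp)
  have hN2 : ∀ k, K ≤ k → 2 ≤ (st f k).2.1 := by
    intro k hk
    have h1 := (hcase1 k hk).2
    have h2 := hc2 (k+1) (by omega)
    omega
  have hgrow : ∀ i : ℕ, 2^(2^i) ≤ (st f (K+i)).2.1 := by
    intro i
    induction i with
    | zero => simpa using hN2 K (le_refl _)
    | succ i ih =>
      have hc := (hcase1 (K+i) (by omega)).1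
      rw [show K+(i+1) = (K+i)+1 by omega, hc]
      calc (2:ℕ)^(2^(i+1)) = (2^(2^i))^2 := by rw [← pow_mul, pow_succ]
        _ ≤ (st f (K+i)).2.1 ^ 2 := Nat.pow_le_pow_left ih 2
  have hub : ∀ k, (st f k).2.1 ≤ 2 * f (2^(k+1)) := fun k => (inv hmono hpos hsub k).1.2
  -- now the subexponential contradiction
  set r : ℝ := (2:ℝ) ^ ((1:ℝ)/((2:ℝ)^(K+3))) with hr
  have hr1 : (1:ℝ) < r := by
    rw [hr]
    apply Real.one_lt_rpow_iff_of_pos (by norm_num) |>.2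
    left
    exact ⟨by norm_num, by positivity⟩
  have hev := hsubexp.eventually_lt_const hr1
  rw [eventually_atTop] at hev
  obtain ⟨M, hM⟩ := hev
  set n : ℕ := 2^(K+M+3) with hn
  have hMn : M ≤ n := by
    calc M ≤ 2^M := Nat.le_of_lt (Nat.lt_two_pow_self (n := M))
    _ ≤ n := Nat.pow_le_pow_right (by norm_num) (by omega)
  have hlt := hM n hMn
  have hfn0 : (0:ℝ) ≤ (f n : ℝ) := by positivity
  have hn0 : (n:ℝ) ≠ 0 := by
    have : 0 < n := Nat.pow_pos (by norm_num)
    exact_mod_cast this.ne'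
  have hfr : (f n : ℝ) < r ^ (n:ℝ) := by
    have h2 := Real.rpow_lt_rpow (by positivity) hlt
      (by positivity : (0:ℝ) < (n:ℝ))
    rwa [← Real.rpow_mul hfn0, one_div, inv_mul_cancel₀ hn0, Real.rpow_one] at h2
  have hexp : ((1:ℝ)/((2:ℝ)^(K+3))) * (n:ℝ) = ((2^M : ℕ) : ℝ) := by
    rw [hn]
    push_cast
    rw [div_mul_eq_mul_div, one_mul, div_eq_iff (by positivity), ← pow_add]
    rw [show K+M+3 = M+(K+3) by omega]
  have hrn : r ^ (n:ℝ) = (2:ℝ) ^ (2^M : ℕ) := by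
    rw [hr, ← Real.rpow_mul (by norm_num : (0:ℝ) ≤ 2), hexp, Real.rpow_natCast]
  have hub2 : ((st f (K+(M+2))).2.1 : ℝ) ≤ 2 * (f n : ℝ) := by
    have := hub (K+(M+2))
    rw [show K+(M+2)+1 = K+M+3 by omega] at this
    exact_mod_cast this
  have hgl : ((2:ℝ))^(2^(M+2) : ℕ) ≤ ((st f (K+(M+2))).2.1 : ℝ) := by
    exact_mod_cast hgrow (M+2)
  have hfin2 : ((2:ℝ))^(2^(M+2) : ℕ) < 2 * (2:ℝ) ^ (2^M : ℕ) := by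
    calc ((2:ℝ))^(2^(M+2) : ℕ) ≤ ((st f (K+(M+2))).2.1 : ℝ) := hgl
      _ ≤ 2 * (f n : ℝ) := hub2
      _ < 2 * r ^ (n:ℝ) := by linarith
      _ = 2 * (2:ℝ) ^ (2^M : ℕ) := by rw [hrn]
  have hnat : (2:ℕ)^(2^(M+2)) < 2 * 2^(2^M) := by exact_mod_cast hfin2
  have h4 : (2:ℕ)^(2^(M+2)) = (2^(2^M))^4 := by
    rw [← pow_mul]
    congr 1
    rw [pow_add]; norm_num
  have hx2 : 2 ≤ (2:ℕ)^(2^M) := by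
    calc (2:ℕ) = 2^1 := (pow_one 2).symm
      _ ≤ 2^(2^M) := Nat.pow_le_pow_right (by norm_num) Nat.one_le_two_pow
  have hcon : 2 * 2^(2^M) ≤ ((2:ℕ)^(2^M))^4 := by
    calc 2 * 2^(2^M) ≤ 2^(2^M) * 2^(2^M) := Nat.mul_le_mul_right _ hx2
      _ = ((2:ℕ)^(2^M))^2 := (sq _).symm
      _ ≤ ((2:ℕ)^(2^M))^4 := Nat.pow_le_pow_right (le_trans one_le_two hx2) (by norm_num)
  omega

end Stmt11Aux

end Stmt11Aux


/-- For `f : ℕ → ℕ` non-decreasing, submultiplicative and subexponential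
(with values `≥ 1`), there is a sequence `(c_k)` of positive integers with `c₀ = 1`,
`c_{k+1} ≤ N_k` where `N_k = f(1)·c₀⋯c_k`, such that `f(2^k) ≤ N_k ≤ 2·f(2^{k+1})` for
all `k`, and `c_k = 1` infinitely often. -/
theorem stmt11 (f : ℕ → ℕ) (hmono : Monotone f) (hpos : ∀ n, 1 ≤ f n)
    (hsub : ∀ m n : ℕ, 1 ≤ m → 1 ≤ n → f (m + n) ≤ f m * f n)
    (hsubexp : Tendsto (fun n : ℕ => (f n : ℝ) ^ ((1 : ℝ) / (n : ℝ))) atTop (nhds 1)) :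
    ∃ c : ℕ → ℕ, c 0 = 1 ∧ (∀ k, 1 ≤ c k) ∧
      (∀ k, c (k + 1) ≤ f 1 * ∏ j ∈ Finset.range (k + 1), c j) ∧
      (∀ k, f (2 ^ k) ≤ f 1 * ∏ j ∈ Finset.range (k + 1), c j ∧
        f 1 * ∏ j ∈ Finset.range (k + 1), c j ≤ 2 * f (2 ^ (k + 1))) ∧
      {k : ℕ | c k = 1}.Infinite := by
  refine ⟨fun k => (Stmt11Aux.st f k).1, rfl, Stmt11Aux.cpos hmono hpos hsub, ?_, ?_, ?_⟩
  · intro k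
    rw [← Stmt11Aux.N_eq_prod]
    exact Stmt11Aux.cle hmono hpos hsub k
  · intro k
    rw [← Stmt11Aux.N_eq_prod]
    exact (Stmt11Aux.inv hmono hpos hsub k).1
  · exact Stmt11Aux.infinite_one hmono hpos hsub hsubexp
end

section
/- Let Σ be a finite alphabet, u ∈ Σ^d with d ≥ 1, and for each n let W(n) ⊆ Σ^{2^n} be nonempty finite sets with W(n+1) ⊆ W(n)·W(n) (every word of W(n+1) is a concatenation of two words from W(n)). Let I_n = [a_n, b_n] be the convex hull in ℝ of {φ_u(w) : w ∈ W(n)}, where φ_u(w) = Φ_u(w)/2^n and Φ_u counts occurrences of u in w. Then I_{n+1} ⊆ I_n + [0, d/2^{n+1}] for every n. -/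
/-- `countOcc u v` is the number of occurrences of `u` as a contiguous factor of `v`. -/
def countOcc {α : Type*} [DecidableEq α] (u v : List α) : ℕ :=
  ((List.range v.length).filter (fun i => (v.drop i).take u.length = u)).length

lemma countOcc_eq_card {α : Type*} [DecidableEq α] (u v : List α) :
    countOcc u v = ((Finset.range v.length).filter (fun i => (v.drop i).take u.length = u)).card := rfl

lemma occ_len {α : Type*} [DecidableEq α] {u v : List α} {i : ℕ}
    (h : (v.drop i).take u.length = u) (hi : i < v.length) : i + u.length ≤ v.length := by
  have := congrArg List.length h
  simp [List.length_take, List.length_drop] at this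
  omega

lemma countOcc_append_ge {α : Type*} [DecidableEq α] (u w₀ w₁ : List α) :
    countOcc u w₀ + countOcc u w₁ ≤ countOcc u (w₀ ++ w₁) := by
  classical
  simp only [countOcc_eq_card]
  set a := w₀.length
  set B := ((Finset.range w₁.length).filter (fun i => (w₁.drop i).take u.length = u)).image (· + a)
  set A := (Finset.range a).filter (fun i => (w₀.drop i).take u.length = u)
  have hcardB : B.card = ((Finset.range w₁.length).filter (fun i => (w₁.drop i).take u.length = u)).card :=
    Finset.card_image_of_injective _ (add_left_injective a)
  have hdisj : Disjoint A B := by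
    rw [Finset.disjoint_left]
    intro x hx hxB
    simp only [A, Finset.mem_filter, Finset.mem_range] at hx
    simp only [B, Finset.mem_image, Finset.mem_filter, Finset.mem_range] at hxB
    obtain ⟨j, _, rfl⟩ := hxB
    omega
  have hsub : A ∪ B ⊆ (Finset.range (w₀ ++ w₁).length).filter
      (fun i => ((w₀ ++ w₁).drop i).take u.length = u) := by
    intro i hi
    simp only [Finset.mem_union, A, B, Finset.mem_filter, Finset.mem_range, Finset.mem_image] at hi ⊢
    rcases hi with ⟨hi, hocc⟩ | ⟨j, ⟨hj, hocc⟩, rfl⟩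
    · have hle := occ_len hocc hi
      constructor
      · simp; omega
      · rw [List.drop_append, List.take_append_of_le_length (by simp [List.length_drop]; omega)]
        exact hocc
    · constructor
      · simp; omega
      · rw [List.drop_append, List.drop_eq_nil_of_le (by omega)]
        simpa [a] using hocc
  rw [← hcardB]
  calc A.card + B.card = (A ∪ B).card := (Finset.card_union_of_disjoint hdisj).symm
    _ ≤ _ := Finset.card_le_card hsub

lemma countOcc_append_le {α : Type*} [DecidableEq α] (u w₀ w₁ : List α) (hd : 1 ≤ u.length) :
    countOcc u (w₀ ++ w₁) ≤ countOcc u w₀ + countOcc u w₁ + u.length := by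
  classical
  simp only [countOcc_eq_card]
  set a := w₀.length
  set A := (Finset.range a).filter (fun i => (w₀.drop i).take u.length = u)
  set B := ((Finset.range w₁.length).filter (fun i => (w₁.drop i).take u.length = u)).image (· + a)
  set C := Finset.Ico (a + 1 - u.length) a
  have hsub : (Finset.range (w₀ ++ w₁).length).filter
      (fun i => ((w₀ ++ w₁).drop i).take u.length = u) ⊆ A ∪ B ∪ C := by
    intro i hi
    simp only [Finset.mem_filter, Finset.mem_range, List.length_append] at hi
    obtain ⟨hi, hocc⟩ := hi
    simp only [Finset.mem_union, A, B, C, Finset.mem_filter, Finset.mem_range, Finset.mem_image,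
      Finset.mem_Ico]
    by_cases h1 : i + u.length ≤ a
    · left; left
      refine ⟨by omega, ?_⟩
      rw [List.drop_append,
        List.take_append_of_le_length (by simp [List.length_drop]; omega)] at hocc
      exact hocc
    · by_cases h2 : a ≤ i
      · left; right
        refine ⟨i - a, ⟨by omega, ?_⟩, by omega⟩
        rw [List.drop_append, List.drop_eq_nil_of_le (by omega)] at hocc
        simpa using hocc
      · right; omega
  have hcardB : B.card = ((Finset.range w₁.length).filter (fun i => (w₁.drop i).take u.length = u)).card :=
    Finset.card_image_of_injective _ (add_left_injective a)
  have hcardC : C.card ≤ u.length := by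
    have := Nat.card_Ico (a + 1 - u.length) a
    simp only [C]
    omega
  calc _ ≤ (A ∪ B ∪ C).card := Finset.card_le_card hsub
    _ ≤ (A ∪ B).card + C.card := Finset.card_union_le _ _
    _ ≤ A.card + B.card + C.card := by gcongr; exact Finset.card_union_le _ _
    _ ≤ _ := by rw [hcardB]; omega

/-- Let `u` have length `d ≥ 1` and let `W n` be nonempty sets of words of
length `2^n` with `W (n+1) ⊆ W n · W n`. Writing `φ_u(w) = Φ_u(w)/2^n` for `w ∈ W n`
and `I_n = [a_n, b_n]` for the convex hull of `{φ_u(w) : w ∈ W n}`, we have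
`I_{n+1} ⊆ I_n + [0, d/2^{n+1}]`. -/
theorem stmt13 {A : Type*} [Fintype A] [DecidableEq A] (u : List A) (d : ℕ)
    (hud : u.length = d) (hd : 1 ≤ d)
    (W : ℕ → Finset (List A)) (hne : ∀ n, (W n).Nonempty)
    (hlen : ∀ n, ∀ w ∈ W n, w.length = 2 ^ n)
    (hsplit : ∀ n, ∀ w ∈ W (n + 1), ∃ w₀ ∈ W n, ∃ w₁ ∈ W n, w = w₀ ++ w₁) (n : ℕ) :
    Set.Icc ((W (n + 1)).inf' (hne (n + 1)) (fun w => (countOcc u w : ℝ) / 2 ^ (n + 1)))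
        ((W (n + 1)).sup' (hne (n + 1)) (fun w => (countOcc u w : ℝ) / 2 ^ (n + 1))) ⊆
      Set.Icc ((W n).inf' (hne n) (fun w => (countOcc u w : ℝ) / 2 ^ n))
        ((W n).sup' (hne n) (fun w => (countOcc u w : ℝ) / 2 ^ n) + d / 2 ^ (n + 1)) := by
  have hp : (0:ℝ) < 2 ^ n := by positivity
  have hp1 : (0:ℝ) < 2 ^ (n + 1) := by positivity
  apply Set.Icc_subset_Icc
  · apply Finset.le_inf'
    intro w hw
    obtain ⟨w₀, hw₀, w₁, hw₁, rfl⟩ := hsplit n w hw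
    have h0 := Finset.inf'_le (fun w => (countOcc u w : ℝ) / 2 ^ n) hw₀
    have h1 := Finset.inf'_le (fun w => (countOcc u w : ℝ) / 2 ^ n) hw₁
    have hkey : (countOcc u w₀ + countOcc u w₁ : ℝ) ≤ countOcc u (w₀ ++ w₁) := by
      exact_mod_cast countOcc_append_ge u w₀ w₁
    rw [le_div_iff₀ hp1]
    rw [le_div_iff₀ hp] at h0 h1
    rw [pow_succ]
    nlinarith
  · apply Finset.sup'_le
    intro w hw
    obtain ⟨w₀, hw₀, w₁, hw₁, rfl⟩ := hsplit n w hw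
    have h0 := Finset.le_sup' (fun w => (countOcc u w : ℝ) / 2 ^ n) hw₀
    have h1 := Finset.le_sup' (fun w => (countOcc u w : ℝ) / 2 ^ n) hw₁
    have hkey : (countOcc u (w₀ ++ w₁) : ℝ) ≤ countOcc u w₀ + countOcc u w₁ + d := by
      exact_mod_cast hud ▸ countOcc_append_le u w₀ w₁ (hud ▸ hd)
    rw [div_le_iff₀ hp] at h0 h1
    rw [div_le_iff₀ hp1, add_mul, div_mul_cancel₀ _ hp1.ne', pow_succ]
    nlinarith
end

section
/- Let (Δ_n)_{n≥1} be a sequence of non-negative reals and S ⊆ ℕ an infinite set, and d > 0 a constant. Suppose Δ_{n+1} ≤ Δ_n + d/2^{n+1} for all n, and Δ_{n+1} ≤ Δ_n/2 + d/2^{n+1} for all n ∈ S. Then Δ_n → 0 as n → ∞. -/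
open Filter

/-- A sequence of non-negative reals that increases by at most `d/2^{n+1}`
at each step and is halved (up to the same error) at each step in an infinite set `S`
converges to `0`. -/
theorem stmt14 (Δ : ℕ → ℝ) (hΔ : ∀ n, 0 ≤ Δ n) (S : Set ℕ) (hS : S.Infinite)
    (d : ℝ) (hd : 0 < d)
    (h1 : ∀ n, Δ (n + 1) ≤ Δ n + d / 2 ^ (n + 1))
    (h2 : ∀ n ∈ S, Δ (n + 1) ≤ Δ n / 2 + d / 2 ^ (n + 1)) :
    Tendsto Δ atTop (nhds 0) := by
  classical
  rw [Metric.tendsto_atTop]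
  intro ε hε
  -- choose n₀ with d * (1/2)^n₀ < ε/2
  obtain ⟨n₀, hn₀⟩ : ∃ n₀ : ℕ, d * (1/2 : ℝ) ^ n₀ < ε / 2 := by
    obtain ⟨n, hn⟩ := exists_pow_lt_of_lt_one (show (0:ℝ) < ε / (2 * d) by positivity)
      (show (1/2 : ℝ) < 1 by norm_num)
    refine ⟨n, ?_⟩
    have := mul_lt_mul_of_pos_left hn hd
    calc d * (1/2:ℝ)^n < d * (ε / (2*d)) := this
      _ = ε / 2 := by field_simp
  set k : ℕ → ℕ := fun m => ((Finset.Ico n₀ m).filter (· ∈ S)).card with hk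
  have key : ∀ m, n₀ ≤ m →
      Δ m ≤ (1/2:ℝ) ^ (k m) * Δ n₀ + d * ((1/2:ℝ) ^ n₀ - (1/2:ℝ) ^ m) := by
    intro m hm
    induction m, hm using Nat.le_induction with
    | base =>
        simp [hk, Finset.Ico_self]
    | succ m hm ih =>
        have hins : Finset.Ico n₀ (m+1) = insert m (Finset.Ico n₀ m) := by
          ext x
          simp only [Finset.mem_Ico, Finset.mem_insert]
          omega
        have hmnot : m ∉ Finset.Ico n₀ m := by simp
        have hq : (1/2:ℝ) ^ (m+1) = (1/2:ℝ)^m / 2 := by rw [pow_succ]; ring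
        have hdq : d / 2 ^ (m+1) = d * ((1/2:ℝ)^m / 2) := by
          rw [← hq, div_pow, one_pow, mul_one_div]
        have hqp : d * (1/2:ℝ)^m ≤ d * (1/2:ℝ)^n₀ := by
          apply mul_le_mul_of_nonneg_left _ hd.le
          exact pow_le_pow_of_le_one (by norm_num) (by norm_num) hm
        by_cases hmS : m ∈ S
        · have hk1 : k (m+1) = k m + 1 := by
            simp only [hk, hins, Finset.filter_insert, if_pos hmS]
            rw [Finset.card_insert_of_notMem (fun h => hmnot (Finset.mem_filter.mp h).1)]
          have hstep := h2 m hmS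
          rw [hdq] at hstep
          rw [hk1, hq, pow_succ]
          nlinarith [hΔ n₀, pow_nonneg (show (0:ℝ) ≤ 1/2 by norm_num) (k m)]
        · have hk1 : k (m+1) = k m := by
            simp only [hk, hins, Finset.filter_insert, if_neg hmS]
          have hstep := h1 m
          rw [hdq] at hstep
          rw [hk1, hq]
          linarith
  -- choose K with (1/2)^K * Δ n₀ < ε/2
  obtain ⟨K, hK⟩ : ∃ K : ℕ, (1/2:ℝ) ^ K * Δ n₀ < ε / 2 := by
    obtain ⟨K, hKlt⟩ := exists_pow_lt_of_lt_one
      (show (0:ℝ) < ε / (2 * (Δ n₀ + 1)) from div_pos hε (by nlinarith [hΔ n₀]))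
      (show (1/2 : ℝ) < 1 by norm_num)
    refine ⟨K, ?_⟩
    have h0 : (0:ℝ) < Δ n₀ + 1 := by nlinarith [hΔ n₀]
    have h1' : (1/2:ℝ)^K * (Δ n₀ + 1) < ε / 2 := by
      have := mul_lt_mul_of_pos_right hKlt h0
      calc (1/2:ℝ)^K * (Δ n₀ + 1) < ε / (2 * (Δ n₀ + 1)) * (Δ n₀ + 1) := this
        _ = ε / 2 := by field_simp
    nlinarith [pow_nonneg (show (0:ℝ) ≤ 1/2 by norm_num) K]
  -- find M with n₀ ≤ M and K ≤ k M
  have hexM : ∀ K' : ℕ, ∃ M, n₀ ≤ M ∧ K' ≤ k M := by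
    intro K'
    induction K' with
    | zero => exact ⟨n₀, le_refl _, Nat.zero_le _⟩
    | succ K' ih =>
        obtain ⟨M, hM1, hM2⟩ := ih
        obtain ⟨s, hsS, hs⟩ := hS.exists_gt M
        refine ⟨s + 1, by omega, ?_⟩
        have hsub : insert s ((Finset.Ico n₀ M).filter (· ∈ S)) ⊆
            (Finset.Ico n₀ (s+1)).filter (· ∈ S) := by
          intro x hx
          rcases Finset.mem_insert.mp hx with rfl | hx
          · exact Finset.mem_filter.mpr ⟨Finset.mem_Ico.mpr ⟨by omega, by omega⟩, hsS⟩
          · obtain ⟨hx1, hx2⟩ := Finset.mem_filter.mp hx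
            obtain ⟨ha, hb⟩ := Finset.mem_Ico.mp hx1
            exact Finset.mem_filter.mpr ⟨Finset.mem_Ico.mpr ⟨ha, by omega⟩, hx2⟩
        have hsnot : s ∉ (Finset.Ico n₀ M).filter (· ∈ S) := by
          intro h
          have := (Finset.mem_Ico.mp (Finset.mem_filter.mp h).1).2
          omega
        have := Finset.card_le_card hsub
        rw [Finset.card_insert_of_notMem hsnot] at this
        simp only [hk] at hM2 this ⊢
        omega
  obtain ⟨M, hM1, hM2⟩ := hexM K
  refine ⟨M, fun m hm => ?_⟩
  have hmn₀ : n₀ ≤ m := le_trans hM1 hm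
  have hkm : K ≤ k m := by
    refine le_trans hM2 ?_
    exact Finset.card_le_card (Finset.filter_subset_filter _ (Finset.Ico_subset_Ico_right hm))
  have hb := key m hmn₀
  have hpow : (1/2:ℝ) ^ (k m) ≤ (1/2:ℝ) ^ K :=
    pow_le_pow_of_le_one (by norm_num) (by norm_num) hkm
  have h3 : (1/2:ℝ) ^ (k m) * Δ n₀ ≤ (1/2:ℝ) ^ K * Δ n₀ :=
    mul_le_mul_of_nonneg_right hpow (hΔ n₀)
  have hqpos : (0:ℝ) < (1/2:ℝ) ^ m := by positivity
  rw [Real.dist_eq, sub_zero, abs_of_nonneg (hΔ m)]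
  nlinarith
end
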